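/- arXiv:1905.06243 — 3 statements merged into one kernel-verified Lean document; each statement's English description precedes it below -/
import Mathlib

section
/- Let (𝒞, J) be a small site and let E = Sheaf(𝒞, J, Type u) be the category of J-sheaves of u-small types. Declare a sieve S on an object X of E to be covering if the family of all morphisms belonging to S is jointly epimorphic in E (equivalently, the induced morphism from the coproduct of the domains of a generating family of S to X is an epimorphism of sheaves). Then these covering sieves form a Grothendieck topology K on E, and a presheaf of u-small types F : Eᵒᵖ ⟶ Type u is a K-sheaf if and only if F is representable. -/
/-!
STATEMENT 2: Let `(𝒞, J)` be a small site and `E = Sheaf J (Type u)` the category of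
`J`-sheaves of `u`-small types.  Declaring a sieve `S` on `X : E` to be covering when the
family of all morphisms belonging to `S` is jointly epimorphic in `E` yields a Grothendieck
topology `K` on `E`, and a presheaf `F : Eᵒᵖ ⥤ Type u` is a `K`-sheaf if and only if `F` is
representable.
-/

open CategoryTheory CategoryTheory.Limits

universe u

/-- A sieve is jointly epimorphic if the family of all morphisms belonging to it can be
jointly cancelled from the right. -/
def CategoryTheory.Sieve.JointlyEpic {E : Type*} [Category E] {X : E} (S : Sieve X) : Prop :=
  ∀ ⦃Z : E⦄ (g h : X ⟶ Z),
    (∀ ⦃W : E⦄ (f : W ⟶ X), S.arrows f → f ≫ g = f ≫ h) → g = h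

namespace JEpi

open Opposite

variable {𝒞 : Type u} [SmallCategory 𝒞] (J : GrothendieckTopology 𝒞)

/-- The sheafified yoneda embedding. -/
noncomputable def G : 𝒞 ⥤ Sheaf J (Type u) := yoneda ⋙ presheafToSheaf J (Type u)

/-- Generalized elements of a sheaf `X` defined on `(G J).obj c` correspond to
sections of `X` over `c`. -/
noncomputable def e {c : 𝒞} {X : Sheaf J (Type u)} : ((G J).obj c ⟶ X) ≃ X.val.obj (op c) :=
  (((sheafificationAdjunction J (Type u)).homEquiv (yoneda.obj c) X).trans yonedaEquiv)

lemma e_left {c c' : 𝒞} (g : c' ⟶ c) {X : Sheaf J (Type u)} (x : (G J).obj c ⟶ X) :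
    e J ((G J).map g ≫ x) = X.val.map g.op (e J x) := by
  show yonedaEquiv (((sheafificationAdjunction J (Type u)).homEquiv _ _)
      ((presheafToSheaf J (Type u)).map (yoneda.map g) ≫ x)) = _
  erw [Adjunction.homEquiv_naturality_left]
  exact (yonedaEquiv_naturality _ _).symm

lemma e_right {c : 𝒞} {X Z : Sheaf J (Type u)} (x : (G J).obj c ⟶ X) (f : X ⟶ Z) :
    e J (x ≫ f) = f.hom.app (op c) (e J x) := by
  show yonedaEquiv (((sheafificationAdjunction J (Type u)).homEquiv _ _) (x ≫ f)) = _
  erw [Adjunction.homEquiv_naturality_right]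
  exact yonedaEquiv_comp _ _

lemma e_Gmap {d c : 𝒞} (k : d ⟶ c) :
    e J ((G J).map k) = (toSheafify J (yoneda.obj c)).app (op d) k := by
  show yonedaEquiv (((sheafificationAdjunction J (Type u)).homEquiv _ _)
      ((presheafToSheaf J (Type u)).map (yoneda.map k))) = _
  rw [← Category.comp_id ((presheafToSheaf J (Type u)).map (yoneda.map k)),
    Adjunction.homEquiv_naturality_left]
  rw [yonedaEquiv_comp]
  have : ((sheafificationAdjunction J (Type u)).homEquiv (yoneda.obj c) _) (𝟙 _) =
      toSheafify J (yoneda.obj c) := by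
    rw [Adjunction.homEquiv_unit]
    simp [sheafificationAdjunction_unit_app]
  rw [this, yonedaEquiv_yoneda_map]
/-- The sieve of morphisms in `𝒞` along which a generalized morphism `w : G d ⟶ G c`
is the image of a morphism of `𝒞`. -/
def downSieve {d c : 𝒞} (w : (G J).obj d ⟶ (G J).obj c) : Sieve d where
  arrows d' g := ∃ k : d' ⟶ c, (G J).map g ≫ w = (G J).map k
  downward_closed := by
    rintro d' d'' g ⟨k, hk⟩ h
    exact ⟨h ≫ k, by rw [Functor.map_comp, Functor.map_comp, Category.assoc, hk]⟩

lemma downSieve_mem {d c : 𝒞} (w : (G J).obj d ⟶ (G J).obj c) : downSieve J w ∈ J d := by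
  apply J.superset_covering _
    (Presheaf.imageSieve_mem J (toSheafify J (yoneda.obj c)) (e J w))
  rintro d' g ⟨k, hk⟩
  refine ⟨k, (e J).injective ?_⟩
  rw [e_left, e_Gmap]
  exact hk.symm

/-- Morphisms of `𝒞` which are identified by `G` are locally equal. -/
lemma locally_eq {d c : 𝒞} (m m' : d ⟶ c) (h : (G J).map m = (G J).map m') :
    (Presheaf.equalizerSieve (F := yoneda.obj c) m m') ∈ J d := by
  apply Presheaf.equalizerSieve_mem J (toSheafify J (yoneda.obj c))
  have := congrArg (e J) h
  rw [e_Gmap, e_Gmap] at this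
  exact this

/-- The sieve on `c` of morphisms `g` such that `G g ≫ x` belongs to `S`. -/
def T {X : Sheaf J (Type u)} (S : Sieve X) {c : 𝒞} (x : (G J).obj c ⟶ X) : Sieve c where
  arrows c' g := S.arrows ((G J).map g ≫ x)
  downward_closed := by
    intro c' c'' g hg h
    show S.arrows ((G J).map (h ≫ g) ≫ x)
    rw [Functor.map_comp, Category.assoc]
    exact S.downward_closed hg _

/-- The topology on sheaves given by local factorization through the sieve. -/
def K : GrothendieckTopology (Sheaf J (Type u)) where
  sieves X S := ∀ ⦃c : 𝒞⦄ (x : (G J).obj c ⟶ X), T J S x ∈ J c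
  top_mem' := by
    intro X c x
    apply J.superset_covering _ (J.top_mem c)
    intro c' g _
    trivial
  pullback_stable' := by
    intro X Y S f hS c x
    have : T J (S.pullback f) x = T J S (x ≫ f) := by
      ext c' g
      show S.arrows (((G J).map g ≫ x) ≫ f) ↔ S.arrows ((G J).map g ≫ x ≫ f)
      rw [Category.assoc]
    rw [this]
    exact hS _
  transitive' := by
    intro X S hS R hR c x
    refine J.transitive (hS x) _ ?_
    intro c' g hg
    apply J.superset_covering _ (hR hg ((𝟙 ((G J).obj c'))))
    intro c'' h hh
    show R.arrows ((G J).map (h ≫ g) ≫ x)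
    have := hh
    simp only [T, Sieve.pullback_apply] at this ⊢
    rw [Functor.map_comp, Category.assoc]
    simpa using this

/-- Separatedness of a `J`-sheaf of types. -/
lemma Jsep (Z : Sheaf J (Type u)) {c : 𝒞} {W : Sieve c} (hW : W ∈ J c)
    {z₁ z₂ : Z.val.obj (op c)}
    (h : ∀ ⦃c'⦄ (g : c' ⟶ c), W.arrows g → Z.val.map g.op z₁ = Z.val.map g.op z₂) :
    z₁ = z₂ := by
  have hZ : Presieve.IsSheaf J Z.val := (isSheaf_iff_isSheaf_of_type J Z.val).1 Z.cond
  exact ((hZ W hW).isSeparatedFor).ext h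

/-- Separatedness of a `K`-sheaf. -/
lemma Ksep {F : (Sheaf J (Type u))ᵒᵖ ⥤ Type*} (hF : Presieve.IsSheaf (K J) F)
    {X : Sheaf J (Type u)} {S : Sieve X} (hS : S ∈ K J X) {a b : F.obj (op X)}
    (h : ∀ ⦃W⦄ (f : W ⟶ X), S.arrows f → F.map f.op a = F.map f.op b) : a = b :=
  ((hF S hS).isSeparatedFor).ext h

lemma jointlyEpic_of_mem {X : Sheaf J (Type u)} {S : Sieve X} (hS : S ∈ K J X) :
    S.JointlyEpic := by
  intro Z g h H
  apply Sheaf.hom_ext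
  ext c z
  induction c using Opposite.rec with | op c => ?_
  set x : (G J).obj c ⟶ X := (e J).symm z with hx
  have hz : e J x = z := (e J).apply_symm_apply z
  apply Jsep J Z (hS x)
  intro c' g' hg'
  have h1 : Z.val.map g'.op (g.hom.app (op c) z) = e J (((G J).map g' ≫ x) ≫ g) := by
    rw [e_right, e_left, hz]
    exact (NatTrans.naturality_apply g.hom g'.op z).symm
  have h2 : Z.val.map g'.op (h.hom.app (op c) z) = e J (((G J).map g' ≫ x) ≫ h) := by
    rw [e_right, e_left, hz]
    exact (NatTrans.naturality_apply h.hom g'.op z).symm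
  erw [h1, h2, H _ hg']
section MemOfJointlyEpic

open CategoryTheory.GrothendieckTopology

variable {X : Sheaf J (Type u)} (S : Sieve X)

/-- The image subpresheaf of the sieve `S`. -/
def impre : Subfunctor X.val where
  obj c := {z | ∃ (W : Sheaf J (Type u)) (f : W ⟶ X) (_ : S.arrows f) (w : W.val.obj c),
    f.hom.app c w = z}
  map := by
    rintro c c' i z ⟨W, f, hf, w, hw⟩
    exact ⟨W, f, hf, W.val.map i w, by rw [FunctorToTypes.naturality, hw]⟩

/-- The local-image subsheaf of the sieve `S`, as a sheaf. -/
noncomputable def imSheaf : Sheaf J (Type u) :=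
  ⟨((impre J S).sheafify J).toFunctor, by
    rw [isSheaf_iff_isSheaf_of_type]
    exact Subfunctor.sheafify_isSheaf _
      ((isSheaf_iff_isSheaf_of_type J X.val).1 X.cond)⟩

/-- The inclusion of the local-image subsheaf. -/
noncomputable def imι : imSheaf J S ⟶ X := ⟨((impre J S).sheafify J).ι⟩

instance : Mono (imι J S) := by
  have : Mono (imι J S).hom := inferInstanceAs (Mono ((impre J S).sheafify J).ι)
  exact @Sheaf.Hom.mono_of_presheaf_mono _ _ _ _ _ _ _ (imι J S) this

lemma mem_impre_sheafify {c : 𝒞ᵒᵖ} {W : Sheaf J (Type u)} (f : W ⟶ X) (hf : S.arrows f)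
    (w : W.val.obj c) : f.hom.app c w ∈ ((impre J S).sheafify J).obj c :=
  Subfunctor.le_sheafify J (impre J S) c ⟨W, f, hf, w, rfl⟩

lemma factor_through_im {W : Sheaf J (Type u)} (f : W ⟶ X) (hf : S.arrows f) :
    ∃ l : W ⟶ imSheaf J S, l ≫ imι J S = f := by
  refine ⟨⟨⟨fun c => TypeCat.ofHom fun w => ⟨f.hom.app c w, mem_impre_sheafify J S f hf w⟩, fun {c c'} i => ?_⟩⟩, ?_⟩
  · ext w
    exact Subtype.ext (by exact NatTrans.naturality_apply f.hom i w)
  · apply Sheaf.hom_ext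
    rfl

lemma epi_imι (hS : S.JointlyEpic) : Epi (imι J S) := by
  constructor
  intro Z u v huv
  have hq : pushout.inl (imι J S) (imι J S) = pushout.inr (imι J S) (imι J S) := by
    apply hS
    intro W f hf
    obtain ⟨l, hl⟩ := factor_through_im J S f hf
    rw [← hl, Category.assoc, Category.assoc, pushout.condition]
  calc u = pushout.inl (imι J S) (imι J S) ≫ pushout.desc u v huv := (pushout.inl_desc u v huv).symm
    _ = pushout.inr (imι J S) (imι J S) ≫ pushout.desc u v huv := by rw [hq]
    _ = v := pushout.inr_desc u v huv

lemma mem_of_jointlyEpic (hS : S.JointlyEpic) : S ∈ K J X := by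
  intro c x
  have : Epi (imι J S) := epi_imι J S hS
  have : IsIso (imι J S) := isIso_of_mono_of_epi _
  have hval : IsIso ((sheafToPresheaf J (Type u)).map (imι J S)) := inferInstance
  have happ : IsIso (((imι J S).hom).app (op c)) := by
    exact inferInstanceAs (IsIso ((((sheafToPresheaf J (Type u)).map (imι J S))).app (op c)))
  -- hence every section of `X` is locally in the image of `S`
  obtain ⟨w, hw⟩ := (asIso (((imι J S).hom).app (op c))).toEquiv.surjective (e J x)
  have hz : (impre J S).sieveOfSection (e J x) ∈ J c := by
    have : e J x = w.1 := hw.symm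
    rw [this]
    exact w.2
  apply J.superset_covering _ hz
  intro c' g hg
  obtain ⟨W, f, hf, w', hw'⟩ := hg
  show S.arrows ((G J).map g ≫ x)
  have : (G J).map g ≫ x = (e J).symm w' ≫ f := by
    apply (e J).injective
    rw [e_left, e_right, Equiv.apply_symm_apply, hw']
  rw [this]
  exact S.downward_closed hf _

end MemOfJointlyEpic
lemma coverPreserving : CoverPreserving J (K J) (G J) := by
  constructor
  intro c R hR
  intro d x
  refine J.transitive (downSieve_mem J x) _ ?_
  rintro d' g ⟨k, hk⟩
  apply J.superset_covering _ (J.pullback_stable k hR)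
  intro d'' m hm
  show (R.functorPushforward (G J)).arrows ((G J).map (m ≫ g) ≫ x)
  refine ⟨d'', m ≫ k, 𝟙 _, hm, ?_⟩
  rw [Category.id_comp, Functor.map_comp, Functor.map_comp, Category.assoc, hk,
    ← Functor.map_comp]

/-- The sieve of all morphisms factoring through an object in the image of `G`. -/
def genSieve (X : Sheaf J (Type u)) : Sieve X where
  arrows W f := ∃ (c : 𝒞) (v : W ⟶ (G J).obj c) (u : (G J).obj c ⟶ X), f = v ≫ u
  downward_closed := by
    rintro W W' f ⟨c, v, u, h⟩ g
    exact ⟨c, g ≫ v, u, by rw [h, Category.assoc]⟩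

lemma genSieve_mem (X : Sheaf J (Type u)) : genSieve J X ∈ K J X := by
  intro c x
  apply J.superset_covering _ (J.top_mem c)
  intro c' g _
  exact ⟨c', 𝟙 _, (G J).map g ≫ x, by rw [Category.id_comp]⟩

lemma map_restrict {F : (Sheaf J (Type u))ᵒᵖ ⥤ Type*} {A B C' : Sheaf J (Type u)}
    {p : A ⟶ B} {q : B ⟶ C'} {r : A ⟶ C'} (hpq : p ≫ q = r) (a : F.obj (op C')) :
    F.map p.op (F.map q.op a) = F.map r.op a := by
  rw [← hpq, op_comp, FunctorToTypes.map_comp_apply]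

lemma compatiblePreserving : CompatiblePreserving.{u+1} (K J) (G J) := by
  constructor
  intro ℱ Z T x hx Y₁ Y₂ X f₁ f₂ g₁ g₂ hg₁ hg₂ hcomm
  have hℱ : Presieve.IsSheaf (K J) ℱ.val := (isSheaf_iff_isSheaf_of_type _ _).1 ℱ.cond
  have key : ∀ {d : 𝒞} (u : (G J).obj d ⟶ X),
      ℱ.val.map (u ≫ f₁).op (x g₁ hg₁) = ℱ.val.map (u ≫ f₂).op (x g₂ hg₂) := by
    intro d u
    have hW : (downSieve J (u ≫ f₁) ⊓ downSieve J (u ≫ f₂)) ∈ J d :=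
      J.intersection_covering (downSieve_mem J _) (downSieve_mem J _)
    apply Ksep J hℱ ((coverPreserving J).cover_preserve hW)
    rintro V φ ⟨d', m, h, ⟨⟨k₁, hk₁⟩, ⟨k₂, hk₂⟩⟩, rfl⟩
    have inner : ℱ.val.map ((G J).map k₁).op (x g₁ hg₁)
        = ℱ.val.map ((G J).map k₂).op (x g₂ hg₂) := by
      have hGk : (G J).map (k₁ ≫ g₁) = (G J).map (k₂ ≫ g₂) := by
        rw [Functor.map_comp, Functor.map_comp, ← hk₁, ← hk₂]
        simp only [Category.assoc, hcomm]
      apply Ksep J hℱ ((coverPreserving J).cover_preserve (locally_eq J _ _ hGk))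
      rintro V' ψ ⟨d'', n, h', hn, rfl⟩
      have hn' : n ≫ k₁ ≫ g₁ = n ≫ k₂ ≫ g₂ := hn
      have hc2 : ℱ.val.map ((G J).map (n ≫ k₁)).op (x g₁ hg₁)
          = ℱ.val.map ((G J).map (n ≫ k₂)).op (x g₂ hg₂) :=
        hx (n ≫ k₁) (n ≫ k₂) hg₁ hg₂
          (by rw [Category.assoc, Category.assoc]; exact hn')
      calc ℱ.val.map (h' ≫ (G J).map n).op (ℱ.val.map ((G J).map k₁).op (x g₁ hg₁))
          = ℱ.val.map (h' ≫ (G J).map (n ≫ k₁)).op (x g₁ hg₁) :=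
            map_restrict J (by rw [Functor.map_comp, Category.assoc]) _
        _ = ℱ.val.map h'.op (ℱ.val.map ((G J).map (n ≫ k₁)).op (x g₁ hg₁)) :=
            (map_restrict J rfl _).symm
        _ = ℱ.val.map h'.op (ℱ.val.map ((G J).map (n ≫ k₂)).op (x g₂ hg₂)) := by rw [hc2]
        _ = ℱ.val.map (h' ≫ (G J).map (n ≫ k₂)).op (x g₂ hg₂) := map_restrict J rfl _
        _ = ℱ.val.map (h' ≫ (G J).map n).op (ℱ.val.map ((G J).map k₂).op (x g₂ hg₂)) :=
            (map_restrict J (by rw [Functor.map_comp, Category.assoc]) _).symm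
    calc ℱ.val.map (h ≫ (G J).map m).op (ℱ.val.map (u ≫ f₁).op (x g₁ hg₁))
        = ℱ.val.map (h ≫ (G J).map k₁).op (x g₁ hg₁) :=
          map_restrict J (by rw [Category.assoc, ← hk₁]) _
      _ = ℱ.val.map h.op (ℱ.val.map ((G J).map k₁).op (x g₁ hg₁)) :=
          (map_restrict J rfl _).symm
      _ = ℱ.val.map h.op (ℱ.val.map ((G J).map k₂).op (x g₂ hg₂)) := by rw [inner]
      _ = ℱ.val.map (h ≫ (G J).map k₂).op (x g₂ hg₂) := map_restrict J rfl _
      _ = ℱ.val.map (h ≫ (G J).map m).op (ℱ.val.map (u ≫ f₂).op (x g₂ hg₂)) :=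
          (map_restrict J (by rw [Category.assoc, ← hk₂]) _).symm
  apply Ksep J hℱ (genSieve_mem J X)
  rintro V φ ⟨c, v, u', rfl⟩
  calc ℱ.val.map (v ≫ u').op (ℱ.val.map f₁.op (x g₁ hg₁))
      = ℱ.val.map (v ≫ (u' ≫ f₁)).op (x g₁ hg₁) :=
        map_restrict J (by rw [Category.assoc]) _
    _ = ℱ.val.map v.op (ℱ.val.map (u' ≫ f₁).op (x g₁ hg₁)) := (map_restrict J rfl _).symm
    _ = ℱ.val.map v.op (ℱ.val.map (u' ≫ f₂).op (x g₂ hg₂)) := by rw [key u']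
    _ = ℱ.val.map (v ≫ (u' ≫ f₂)).op (x g₂ hg₂) := map_restrict J rfl _
    _ = ℱ.val.map (v ≫ u').op (ℱ.val.map f₂.op (x g₂ hg₂)) :=
        (map_restrict J (by rw [Category.assoc]) _).symm

/-- `G` is a continuous functor. -/
lemma isContinuous : Functor.IsContinuous.{u} (G J) J (K J) :=
  Functor.isContinuous_of_coverPreserving (compatiblePreserving J) (coverPreserving J)

/-- The restriction of a `K`-sheaf along `G` is a `J`-sheaf. -/
lemma restrict_isSheaf (F : (Sheaf J (Type u))ᵒᵖ ⥤ Type u) (hF : Presheaf.IsSheaf (K J) F) :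
    Presheaf.IsSheaf J ((G J).op ⋙ F) := by
  have := isContinuous J
  exact Functor.op_comp_isSheaf (G J) J (K J) ⟨F, hF⟩
section Representable

variable (F : (Sheaf J (Type u))ᵒᵖ ⥤ Type u) (hF : Presheaf.IsSheaf (K J) F)

/-- The candidate representing object: the restriction of `F` along `G`. -/
noncomputable def Xrep : Sheaf J (Type u) := ⟨(G J).op ⋙ F, restrict_isSheaf J F hF⟩

lemma star {d c : 𝒞} (w : (G J).obj d ⟶ (G J).obj c) (ξ : (G J).obj c ⟶ Xrep J F hF) :
    F.map w.op (e J ξ) = e J (w ≫ ξ) := by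
  apply Jsep J (Xrep J F hF) (downSieve_mem J w)
  rintro d' g' ⟨k, hk⟩
  show F.map ((G J).map g').op (F.map w.op (e J ξ)) = F.map ((G J).map g').op (e J (w ≫ ξ))
  calc F.map ((G J).map g').op (F.map w.op (e J ξ))
      = F.map ((G J).map g' ≫ w).op (e J ξ) := map_restrict J rfl _
    _ = F.map ((G J).map k).op (e J ξ) := by rw [hk]
    _ = (id (e J ((G J).map k ≫ ξ)) : F.obj (op ((G J).obj d'))) := by exact (e_left J k ξ).symm
    _ = (id (e J (((G J).map g' ≫ w) ≫ ξ)) : F.obj (op ((G J).obj d'))) := by rw [hk]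
    _ = (id (e J ((G J).map g' ≫ (w ≫ ξ))) : F.obj (op ((G J).obj d'))) := by rw [Category.assoc]
    _ = F.map ((G J).map g').op (e J (w ≫ ξ)) := e_left J g' (w ≫ ξ)

/-- The comparison map `F.obj (op Y) → (Y ⟶ Xrep)`. -/
noncomputable def α (Y : Sheaf J (Type u)) (ζ : F.obj (op Y)) : Y ⟶ Xrep J F hF :=
  ⟨{ app := fun c => TypeCat.ofHom fun y => F.map ((e J).symm (show Y.val.obj (op c.unop) from y)).op ζ
     naturality := by
       intro c c' i
       ext y
       have h1 : (e J).symm (show Y.val.obj (op c'.unop) from Y.val.map i y)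
           = (G J).map i.unop ≫ (e J).symm (show Y.val.obj (op c.unop) from y) := by
         apply (e J).injective
         rw [Equiv.apply_symm_apply, e_left, Equiv.apply_symm_apply]
         rfl
       show F.map ((e J).symm (show Y.val.obj (op c'.unop) from Y.val.map i y)).op ζ
           = F.map ((G J).map i.unop).op
               (F.map ((e J).symm (show Y.val.obj (op c.unop) from y)).op ζ)
       rw [h1, (map_restrict J rfl ζ)] }⟩

lemma α_app {Y : Sheaf J (Type u)} (ζ : F.obj (op Y)) {c : 𝒞} (y : Y.val.obj (op c)) :
    (α J F hF Y ζ).hom.app (op c) y = F.map ((e J).symm y).op ζ := rfl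

lemma α_nat {Y Y' : Sheaf J (Type u)} (f : Y ⟶ Y') (ζ : F.obj (op Y')) :
    α J F hF Y (F.map f.op ζ) = f ≫ α J F hF Y' ζ := by
  apply Sheaf.hom_ext
  ext c y
  induction c using Opposite.rec with | op c => ?_
  have h1 : (e J).symm (f.hom.app (op c) y) = (e J).symm y ≫ f := by
    apply (e J).injective
    rw [Equiv.apply_symm_apply, e_right, Equiv.apply_symm_apply]
  show F.map ((e J).symm y).op (F.map f.op ζ)
      = F.map ((e J).symm (f.hom.app (op c) y)).op ζ
  rw [h1, map_restrict J rfl]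

lemma α_inj {Y : Sheaf J (Type u)} {ζ₁ ζ₂ : F.obj (op Y)}
    (h : α J F hF Y ζ₁ = α J F hF Y ζ₂) : ζ₁ = ζ₂ := by
  have hFt : Presieve.IsSheaf (K J) F := (isSheaf_iff_isSheaf_of_type _ _).1 hF
  apply Ksep J hFt (genSieve_mem J Y)
  rintro V φ ⟨c, v, u, rfl⟩
  have hu : F.map u.op ζ₁ = F.map u.op ζ₂ := by
    have := ConcreteCategory.congr_hom (congr_app (congrArg InducedCategory.Hom.hom h) (op c)) (e J u)
    simp only [α_app] at this
    rwa [Equiv.symm_apply_apply] at this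
  rw [← map_restrict J rfl ζ₁, ← map_restrict J rfl ζ₂, hu]

lemma value_indep {Y : Sheaf J (Type u)} (t : Y ⟶ Xrep J F hF) {W : Sheaf J (Type u)}
    {f : W ⟶ Y} {c₁ c₂ : 𝒞} (v₁ : W ⟶ (G J).obj c₁) (u₁ : (G J).obj c₁ ⟶ Y)
    (v₂ : W ⟶ (G J).obj c₂) (u₂ : (G J).obj c₂ ⟶ Y)
    (h₁ : v₁ ≫ u₁ = f) (h₂ : v₂ ≫ u₂ = f) :
    F.map v₁.op (e J (u₁ ≫ t)) = F.map v₂.op (e J (u₂ ≫ t)) := by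
  have hFt : Presieve.IsSheaf (K J) F := (isSheaf_iff_isSheaf_of_type _ _).1 hF
  apply Ksep J hFt (genSieve_mem J W)
  rintro V φ ⟨d, v, u, rfl⟩
  have side : ∀ {c : 𝒞} (v' : W ⟶ (G J).obj c) (u' : (G J).obj c ⟶ Y) (h : v' ≫ u' = f),
      F.map (v ≫ u).op (F.map v'.op (e J (u' ≫ t))) = F.map v.op (e J (u ≫ (f ≫ t))) := by
    intro c v' u' h
    calc F.map (v ≫ u).op (F.map v'.op (e J (u' ≫ t)))
        = F.map (v ≫ (u ≫ v')).op (e J (u' ≫ t)) :=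
          map_restrict J (by simp only [Category.assoc]) _
      _ = F.map v.op (F.map (u ≫ v').op (e J (u' ≫ t))) := (map_restrict J rfl _).symm
      _ = F.map v.op (e J ((u ≫ v') ≫ (u' ≫ t))) := by rw [star J F hF (u ≫ v') (u' ≫ t)]
      _ = F.map v.op (e J (u ≫ (f ≫ t))) := by
          rw [show (u ≫ v') ≫ (u' ≫ t) = u ≫ (f ≫ t) by
            rw [← h]; simp only [Category.assoc]]
  rw [side v₁ u₁ h₁, side v₂ u₂ h₂]

lemma α_surj {Y : Sheaf J (Type u)} (t : Y ⟶ Xrep J F hF) : ∃ ζ, α J F hF Y ζ = t := by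
  classical
  have hFt : Presieve.IsSheaf (K J) F := (isSheaf_iff_isSheaf_of_type _ _).1 hF
  set S := genSieve J Y with hSdef
  let fam : Presieve.FamilyOfElements F S.arrows := fun W f hf =>
    F.map hf.choose_spec.choose.op (e J (hf.choose_spec.choose_spec.choose ≫ t))
  have fam_eq : ∀ {W : Sheaf J (Type u)} {f : W ⟶ Y} (hf : S.arrows f) {c : 𝒞}
      (v : W ⟶ (G J).obj c) (u : (G J).obj c ⟶ Y) (h : v ≫ u = f),
      fam f hf = F.map v.op (e J (u ≫ t)) := by
    intro W f hf c v u h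
    exact value_indep J F hF t _ _ v u hf.choose_spec.choose_spec.choose_spec.symm h
  have fam_compat : fam.Compatible := by
    intro W₁ W₂ V g₁ g₂ f₁ f₂ h₁ h₂ hcomm
    obtain ⟨c₁, v₁, u₁, hd₁⟩ := id h₁
    obtain ⟨c₂, v₂, u₂, hd₂⟩ := id h₂
    rw [fam_eq h₁ v₁ u₁ hd₁.symm, fam_eq h₂ v₂ u₂ hd₂.symm]
    calc F.map g₁.op (F.map v₁.op (e J (u₁ ≫ t)))
        = F.map (g₁ ≫ v₁).op (e J (u₁ ≫ t)) := map_restrict J rfl _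
      _ = F.map (g₂ ≫ v₂).op (e J (u₂ ≫ t)) := by
          apply value_indep J F hF t (g₁ ≫ v₁) u₁ (g₂ ≫ v₂) u₂ (f := g₁ ≫ f₁)
          · rw [Category.assoc, ← hd₁]
          · rw [Category.assoc, ← hd₂, hcomm]
      _ = F.map g₂.op (F.map v₂.op (e J (u₂ ≫ t))) := (map_restrict J rfl _).symm
  obtain ⟨ζ, hζ, -⟩ := hFt S (genSieve_mem J Y) fam fam_compat
  refine ⟨ζ, ?_⟩
  apply Sheaf.hom_ext
  ext c y
  induction c using Opposite.rec with | op c => ?_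
  have hmem : S.arrows ((e J).symm y) := ⟨c, 𝟙 _, (e J).symm y, by rw [Category.id_comp]⟩
  have h1 : F.map ((e J).symm y).op ζ = fam ((e J).symm y) hmem := hζ _ hmem
  show F.map ((e J).symm y).op ζ = t.hom.app (op c) y
  rw [h1, fam_eq hmem (𝟙 _) ((e J).symm y) (Category.id_comp _)]
  have : F.map (𝟙 ((G J).obj c)).op (e J ((e J).symm y ≫ t)) = e J ((e J).symm y ≫ t) := by
    rw [op_id]; exact F.map_id_apply _ _
  rw [this, e_right, Equiv.apply_symm_apply]

/-- A `K`-sheaf is representable. -/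
noncomputable def repOfSheaf : F.RepresentableBy (Xrep J F hF) := by
  have bij : ∀ Y : Sheaf J (Type u), Function.Bijective (α J F hF Y) := fun Y =>
    ⟨fun a b h => α_inj J F hF h, fun t => α_surj J F hF t⟩
  exact
    { homEquiv := fun {Y} => (Equiv.ofBijective (α J F hF Y) (bij Y)).symm
      homEquiv_comp := fun {Y Y'} f g => by
        apply (Equiv.ofBijective (α J F hF Y) (bij Y)).injective
        rw [Equiv.apply_symm_apply]
        show f ≫ g = α J F hF Y (F.map f.op ((Equiv.ofBijective (α J F hF Y') (bij Y')).symm g))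
        rw [α_nat]
        have hg : α J F hF Y' ((Equiv.ofBijective (α J F hF Y') (bij Y')).symm g) = g :=
          (Equiv.ofBijective (α J F hF Y') (bij Y')).apply_symm_apply g
        rw [hg] }

end Representable
section YonedaSheaf

variable (X₀ : Sheaf J (Type u))

lemma yoneda_isSheafFor {Y : Sheaf J (Type u)} (S : Sieve Y) (hS : S ∈ K J Y) :
    Presieve.IsSheafFor (yoneda.obj X₀) S.arrows := by
  have hX : Presieve.IsSheaf J X₀.val := (isSheaf_iff_isSheaf_of_type J X₀.val).1 X₀.cond
  intro s hs
  -- the section of `X₀` over `d` associated with an arrow `a : G d ⟶ Y` of the sieve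
  let V : ∀ {d : 𝒞} (a : (G J).obj d ⟶ Y), S.arrows a → X₀.val.obj (op d) :=
    fun a ha => e J (s a ha)
  have Veq : ∀ {d : 𝒞} {a a' : (G J).obj d ⟶ Y} (h : a = a') (ha : S.arrows a)
      (ha' : S.arrows a'), V a ha = V a' ha' := by
    rintro d a _ rfl ha ha'
    rfl
  have Vres : ∀ {d d' : 𝒞} (h : d' ⟶ d) (a : (G J).obj d ⟶ Y) (ha : S.arrows a),
      X₀.val.map h.op (V a ha) = V ((G J).map h ≫ a) (S.downward_closed ha _) := by
    intro d d' h a ha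
    show X₀.val.map h.op (e J (s a ha)) = e J (s ((G J).map h ≫ a) _)
    rw [← e_left]
    exact congrArg (e J) (Presieve.FamilyOfElements.comp_of_compatible S hs ha _).symm
  -- compatibility of the induced family over `T J S x`
  have compat : ∀ {c : 𝒞} (x : (G J).obj c ⟶ Y),
      (Presieve.FamilyOfElements.Compatible (P := X₀.val)
        (fun _ g' hg' => V ((G J).map g' ≫ x) hg' :
          Presieve.FamilyOfElements X₀.val (T J S x).arrows)) := by
    intro c x c₁ c₂ d h₁ h₂ g₁ g₂ hg₁ hg₂ hcomm
    rw [Vres h₁ _ hg₁, Vres h₂ _ hg₂]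
    apply Veq
    rw [← Category.assoc, ← Functor.map_comp, ← Category.assoc, ← Functor.map_comp, hcomm]
  -- gluing
  let glue : ∀ {c : 𝒞} (x : (G J).obj c ⟶ Y), X₀.val.obj (op c) :=
    fun {c} x => (hX _ (hS x)).amalgamate _ (compat x)
  have gluevalid : ∀ {c : 𝒞} (x : (G J).obj c ⟶ Y) {c' : 𝒞} (g' : c' ⟶ c)
      (hg' : (T J S x).arrows g'),
      X₀.val.map g'.op (glue x) = V ((G J).map g' ≫ x) hg' :=
    fun {c} x {c'} g' hg' => (hX _ (hS x)).valid_glue (compat x) g' hg'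
  have glue_res : ∀ {c : 𝒞} (x : (G J).obj c ⟶ Y) {c' : 𝒞} (h : c' ⟶ c),
      X₀.val.map h.op (glue x) = glue ((G J).map h ≫ x) := by
    intro c x c' h
    apply Jsep J X₀ (hS ((G J).map h ≫ x))
    intro c'' g' hg'
    have hg'' : (T J S x).arrows (g' ≫ h) := by
      show S.arrows _
      rw [Functor.map_comp, Category.assoc]
      exact hg'
    rw [← FunctorToTypes.map_comp_apply, ← op_comp, gluevalid x (g' ≫ h) hg'',
      gluevalid ((G J).map h ≫ x) g' hg']
    apply Veq
    rw [Functor.map_comp, Category.assoc]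
  -- the amalgamation
  have hexists : ∃ t : Y ⟶ X₀, ∀ ⦃W : Sheaf J (Type u)⦄ (f : W ⟶ Y) (hf : S.arrows f),
      f ≫ t = s f hf := by
    refine ⟨⟨{ app := fun c => TypeCat.ofHom fun y => glue ((e J).symm (show Y.val.obj (op c.unop) from y))
               naturality := ?_ }⟩, ?_⟩
    · intro c c' i
      ext y
      have h1 : (e J).symm (show Y.val.obj (op c'.unop) from Y.val.map i y)
          = (G J).map i.unop ≫ (e J).symm (show Y.val.obj (op c.unop) from y) := by
        apply (e J).injective
        rw [Equiv.apply_symm_apply, e_left, Equiv.apply_symm_apply]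
        rfl
      show glue ((e J).symm (show Y.val.obj (op c'.unop) from Y.val.map i y))
          = X₀.val.map i (glue ((e J).symm (show Y.val.obj (op c.unop) from y)))
      rw [h1, ← glue_res]
      rfl
    · intro W f hf
      apply Sheaf.hom_ext
      ext c w
      induction c using Opposite.rec with | op c => ?_
      show glue ((e J).symm (f.hom.app (op c) w)) = (s f hf).hom.app (op c) w
      have h1 : (e J).symm (f.hom.app (op c) w) = (e J).symm w ≫ f := by
        apply (e J).injective
        rw [Equiv.apply_symm_apply, e_right, Equiv.apply_symm_apply]
      rw [h1]
      apply Jsep J X₀ (hS ((e J).symm w ≫ f))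
      intro c' g' hg'
      rw [gluevalid _ g' hg']
      have h2 : (G J).map g' ≫ (e J).symm w ≫ f = ((G J).map g' ≫ (e J).symm w) ≫ f := by
        rw [Category.assoc]
      have h3 : S.arrows (((G J).map g' ≫ (e J).symm w) ≫ f) := S.downward_closed hf _
      rw [Veq h2 hg' h3]
      show e J (s (((G J).map g' ≫ (e J).symm w) ≫ f) h3) = _
      rw [congrArg (e J) (Presieve.FamilyOfElements.comp_of_compatible S hs hf
        ((G J).map g' ≫ (e J).symm w))]
      show e J (((G J).map g' ≫ (e J).symm w) ≫ s f hf) = _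
      rw [Category.assoc, e_left, e_right, Equiv.apply_symm_apply]
  obtain ⟨t, ht⟩ := hexists
  refine ⟨t, fun W f hf => ht f hf, fun t' ht' => ?_⟩
  apply jointlyEpic_of_mem J hS
  intro W f hf
  exact (ht' f hf).trans (ht f hf).symm

end YonedaSheaf
lemma yoneda_isSheaf (X₀ : Sheaf J (Type u)) : Presheaf.IsSheaf (K J) (yoneda.obj X₀) := by
  rw [isSheaf_iff_isSheaf_of_type]
  intro Y S hS
  exact yoneda_isSheafFor J X₀ S hS

lemma isSheaf_of_representable (F : (Sheaf J (Type u))ᵒᵖ ⥤ Type u) (hR : F.IsRepresentable) :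
    Presheaf.IsSheaf (K J) F := by
  obtain ⟨X₀, ⟨r⟩⟩ := hR.has_representation
  rw [isSheaf_iff_isSheaf_of_type]
  exact Presieve.isSheaf_iso (K J) r.toIso
    ((isSheaf_iff_isSheaf_of_type _ _).1 (yoneda_isSheaf J X₀))

end JEpi

theorem sheaf_for_jointlyEpic_topology_iff_representable
    {𝒞 : Type u} [SmallCategory 𝒞] (J : GrothendieckTopology 𝒞) :
    ∃ K : GrothendieckTopology (Sheaf J (Type u)),
      (∀ (X : Sheaf J (Type u)) (S : Sieve X), S ∈ K X ↔ S.JointlyEpic) ∧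
      (∀ F : (Sheaf J (Type u))ᵒᵖ ⥤ Type u,
        Presheaf.IsSheaf K F ↔ F.IsRepresentable) := by
  refine ⟨JEpi.K J, fun X S => ⟨fun h => JEpi.jointlyEpic_of_mem J h,
    fun h => JEpi.mem_of_jointlyEpic J S h⟩, fun F => ⟨fun hF =>
      (JEpi.repOfSheaf J F hF).isRepresentable,
    fun hR => JEpi.isSheaf_of_representable J F hR⟩⟩
end

section
/- Let (R_i)_{i ∈ I} be a filtered (directed) system of commutative rings with colimit R, and let A be any type, regarded as a discrete topological space. Pullback along the induced continuous maps Spec R ⟶ Spec R_i on prime spectra defines a canonical map colim_{i ∈ I} LocallyConstant(Spec R_i, A) ⟶ LocallyConstant(Spec R, A) from the filtered colimit of the sets of locally constant A-valued functions on the spectra Spec R_i to the set of locally constant A-valued functions on Spec R, and this map is a bijection. -/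
/-!
STATEMENT 5: For a filtered system of commutative rings `(R_i)` with colimit `R` and a
(discrete) type `A`, the canonical map
`colim_i LocallyConstant (Spec R_i) A ⟶ LocallyConstant (Spec R) A`, induced by pulling back
along the maps `Spec R ⟶ Spec R_i`, is a bijection.
-/

open CategoryTheory CategoryTheory.Limits

universe u

/-- The functor sending an object `i` of the index category to the set of locally constant
`A`-valued functions on `Spec (F.obj i)`, with transition maps given by pullback along the
induced maps on prime spectra. -/
@[simps]
noncomputable def locallyConstantSpecFunctor {I : Type u} [SmallCategory I]
    (F : I ⥤ CommRingCat.{u}) (A : Type u) : I ⥤ Type u where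
  obj i := LocallyConstant (PrimeSpectrum (F.obj i)) A
  map {i j} k := TypeCat.ofHom (LocallyConstant.comap
    (⟨PrimeSpectrum.comap (F.map k).hom, PrimeSpectrum.continuous_comap _⟩ : C(_, _)))
  map_id i := by
    ext g x
    simp [PrimeSpectrum.comap_id]
  map_comp {i j l} k₁ k₂ := by
    ext g x
    simp [PrimeSpectrum.comap_comp]

/-- The cocone on `locallyConstantSpecFunctor F A` with apex the locally constant `A`-valued
functions on the spectrum of the colimit ring, given by pullback along `Spec c.pt ⟶ Spec R_i`. -/
@[simps]
noncomputable def locallyConstantSpecCocone {I : Type u} [SmallCategory I]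
    (F : I ⥤ CommRingCat.{u}) (c : Cocone F) (A : Type u) :
    Cocone (locallyConstantSpecFunctor F A) where
  pt := LocallyConstant (PrimeSpectrum c.pt) A
  ι :=
    { app := fun i => TypeCat.ofHom (LocallyConstant.comap
      (⟨PrimeSpectrum.comap (c.ι.app i).hom, PrimeSpectrum.continuous_comap _⟩ : C(_, _)))
      naturality := fun i j k => by
        ext g
        refine LocallyConstant.ext fun x => ?_
        show DFunLike.coe (F := LocallyConstant (PrimeSpectrum (F.obj i)) A) g
            (PrimeSpectrum.comap (F.map k).hom (PrimeSpectrum.comap (c.ι.app j).hom x)) =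
          DFunLike.coe (F := LocallyConstant (PrimeSpectrum (F.obj i)) A) g (PrimeSpectrum.comap (c.ι.app i).hom x)
        simp only [← c.w k, CommRingCat.hom_comp, PrimeSpectrum.comap_comp, Function.comp_apply] }

namespace SpecColimAux


open PrimeSpectrum

section RingFacts

variable {R : Type*} [CommRing R]

lemma isUnit_of_not_mem_prime {e : R} (h : ∀ p : PrimeSpectrum R, e ∉ p.asIdeal) :
    IsUnit e := by
  by_contra hu
  obtain ⟨I, hI, hmem⟩ := exists_max_ideal_of_mem_nonunits (mem_nonunits_iff.mpr hu)
  exact h ⟨I, hI.isPrime⟩ hmem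

lemma idem_eq_one_of_isUnit {e : R} (he : IsIdempotentElem e) (hu : IsUnit e) :
    e = 1 :=
  hu.mul_left_cancel (by rw [he.eq, mul_one])

lemma mem_prime_iff_one_sub_not_mem {e : R} (he : IsIdempotentElem e) (p : PrimeSpectrum R) :
    e ∈ p.asIdeal ↔ 1 - e ∉ p.asIdeal := by
  constructor
  · intro h h'
    have h1 : (1 : R) ∈ p.asIdeal := by simpa using p.asIdeal.add_mem h h'
    exact p.isPrime.ne_top (p.asIdeal.eq_top_of_isUnit_mem h1 isUnit_one)
  · intro h
    have h0 : e * (1 - e) = 0 := by rw [mul_sub, mul_one, he.eq, sub_self]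
    rcases p.isPrime.mem_or_mem (show e * (1 - e) ∈ p.asIdeal by
      rw [h0]; exact p.asIdeal.zero_mem) with h1 | h2
    · exact h1
    · exact absurd h2 h

end RingFacts

section Clopen

variable {X : Type*} [TopologicalSpace X] {A : Type*}

lemma isClopen_eqLocus (f g : LocallyConstant X A) : IsClopen {x | f x = g x} := by
  have h : ∀ x : X, ∃ U : Set X, IsOpen U ∧ x ∈ U ∧ ∀ y ∈ U, (f y = g y ↔ f x = g x) := by
    intro x
    refine ⟨f ⁻¹' {f x} ∩ g ⁻¹' {g x},
      (f.isLocallyConstant _).inter (g.isLocallyConstant _), ⟨rfl, rfl⟩, ?_⟩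
    rintro y ⟨hy1, hy2⟩
    simp only [Set.mem_preimage, Set.mem_singleton_iff] at hy1 hy2
    rw [hy1, hy2]
  constructor
  · rw [← isOpen_compl_iff]
    refine isOpen_iff_forall_mem_open.mpr fun x hx => ?_
    obtain ⟨U, hU, hxU, hU'⟩ := h x
    exact ⟨U, fun y hy hy' => hx ((hU' y hy).mp hy'), hU, hxU⟩
  · refine isOpen_iff_forall_mem_open.mpr fun x hx => ?_
    obtain ⟨U, hU, hxU, hU'⟩ := h x
    exact ⟨U, fun y hy => (hU' y hy).mpr hx, hU, hxU⟩

end Clopen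

section Pick

open scoped Classical

variable {R : Type*} [CommRing R] {A : Type*}

noncomputable def pick (y : A → R) (a₀ : A) : List A → PrimeSpectrum R → A
  | [], _ => a₀
  | a :: L, p => if y a ∉ p.asIdeal then a else pick y a₀ L p

lemma isOpen_pick_fiber (y : A → R) (a₀ : A) (L : List A)
    (hy : ∀ a ∈ L, IsIdempotentElem (y a)) (v : A) :
    IsOpen {p : PrimeSpectrum R | pick y a₀ L p = v} := by
  induction L with
  | nil =>
    by_cases h : a₀ = v
    · convert isOpen_univ
      ext p; simp [pick, h]
    · convert isOpen_empty
      ext p; simp [pick, h]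
  | cons a L ih =>
    have ha := hy a (List.mem_cons_self)
    have hL := fun b hb => hy b (List.mem_cons_of_mem a hb)
    have hset : {p : PrimeSpectrum R | pick y a₀ (a :: L) p = v} =
        ({p : PrimeSpectrum R | y a ∉ p.asIdeal ∧ a = v} ∪
         ((basicOpen (1 - y a) : Set (PrimeSpectrum R)) ∩
           {p | pick y a₀ L p = v})) := by
      ext p
      simp only [Set.mem_setOf_eq, Set.mem_union, Set.mem_inter_iff, SetLike.mem_coe,
        mem_basicOpen, pick]
      rw [← mem_prime_iff_one_sub_not_mem ha p]
      by_cases h : y a ∈ p.asIdeal <;> simp [h]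
    rw [hset]
    apply IsOpen.union
    · by_cases h : a = v
      · have : {p : PrimeSpectrum R | y a ∉ p.asIdeal ∧ a = v} =
            (basicOpen (y a) : Set (PrimeSpectrum R)) := by
          ext p; simp [mem_basicOpen, h]
        rw [this]; exact (basicOpen (y a)).isOpen
      · have : {p : PrimeSpectrum R | y a ∉ p.asIdeal ∧ a = v} = ∅ := by
          ext p; simp [h]
        rw [this]; exact isOpen_empty
    · exact (basicOpen (1 - y a)).isOpen.inter (ih hL)

lemma pick_eq (y : A → R) (a₀ : A) (L : List A) (p : PrimeSpectrum R) {v : A} (hv : v ∈ L)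
    (hvp : y v ∉ p.asIdeal) (huniq : ∀ a ∈ L, y a ∉ p.asIdeal → a = v) :
    pick y a₀ L p = v := by
  induction L with
  | nil => exact absurd hv (List.not_mem_nil)
  | cons a L ih =>
    by_cases h : y a ∉ p.asIdeal
    · rw [pick, if_pos h]
      exact huniq a (List.mem_cons_self) h
    · rw [pick, if_neg h]
      have hv' : v ∈ L := by
        rcases List.mem_cons.mp hv with rfl | hv'
        · exact absurd hvp h
        · exact hv'
      exact ih hv' fun a ha => huniq a (List.mem_cons_of_mem _ ha)

end Pick



section Colim

open scoped Classical

variable {I : Type u} [SmallCategory I] [IsFiltered I]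
  {F : I ⥤ CommRingCat.{u}} {c : Cocone F}

lemma exists_map_eq (hc : IsColimit c) {j : I} (x y : F.obj j)
    (h : c.ι.app j x = c.ι.app j y) :
    ∃ (k : I) (m : j ⟶ k), F.map m x = F.map m y := by
  obtain ⟨k, f, g, hfg⟩ := Concrete.isColimit_exists_of_rep_eq F hc x y h
  refine ⟨IsFiltered.coeq f g, f ≫ IsFiltered.coeqHom f g, ?_⟩
  have h2 : f ≫ IsFiltered.coeqHom f g = g ≫ IsFiltered.coeqHom f g :=
    IsFiltered.coeq_condition f g
  have e1 : F.map (f ≫ IsFiltered.coeqHom f g) x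
      = F.map (IsFiltered.coeqHom f g) (F.map f x) := by
    rw [F.map_comp]; rfl
  have e2 : F.map (g ≫ IsFiltered.coeqHom f g) y
      = F.map (IsFiltered.coeqHom f g) (F.map g y) := by
    rw [F.map_comp]; rfl
  rw [e1, h2, e2, hfg]

lemma app_map_apply (hc : IsColimit c) {j k : I} (m : j ⟶ k) (x : F.obj j) :
    c.ι.app k (F.map m x) = c.ι.app j x := by
  have h : (F.map m ≫ c.ι.app k) x = c.ι.app j x := by rw [c.w m]
  exact h

lemma exists_lift_idem (hc : IsColimit c) {A : Type*} (L : List A) (e : A → c.pt)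
    (he : ∀ a, IsIdempotentElem (e a)) :
    ∃ (j : I) (y : A → F.obj j),
      ∀ a ∈ L, c.ι.app j (y a) = e a ∧ IsIdempotentElem (y a) := by
  induction L with
  | nil =>
    obtain ⟨j⟩ := IsFiltered.nonempty (C := I)
    exact ⟨j, fun _ => 1, fun a ha => absurd ha (List.not_mem_nil)⟩
  | cons a L ih =>
    obtain ⟨j, y, hy⟩ := ih
    obtain ⟨j', x, hx⟩ := Concrete.isColimit_exists_rep F hc (e a)
    set mj := IsFiltered.leftToMax j j'
    set mj' := IsFiltered.rightToMax j j'
    set m := IsFiltered.max j j'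
    set y₁ : A → F.obj m := fun b => F.map mj (y b) with hy₁def
    set x₁ : F.obj m := F.map mj' x with hx₁def
    have hx₁ : c.ι.app m x₁ = e a := by rw [hx₁def, app_map_apply hc, hx]
    have hidem : c.ι.app m (x₁ * x₁) = c.ι.app m x₁ := by
      rw [map_mul, hx₁, (he a).eq]
    obtain ⟨k, mk, hmk⟩ := exists_map_eq hc _ _ hidem
    refine ⟨k, fun b => if b = a then F.map mk x₁ else F.map mk (y₁ b), ?_⟩
    intro b hb
    dsimp only
    by_cases hba : b = a
    · subst hba
      rw [if_pos rfl]
      constructor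
      · rw [app_map_apply hc, hx₁]
      · show F.map mk x₁ * F.map mk x₁ = F.map mk x₁
        rw [← map_mul, hmk]
    · rw [if_neg hba]
      have hb' : b ∈ L := by
        rcases List.mem_cons.mp hb with rfl | hb'
        · exact absurd rfl hba
        · exact hb'
      obtain ⟨hyb1, hyb2⟩ := hy b hb'
      constructor
      · rw [app_map_apply hc, hy₁def]
        rw [app_map_apply hc, hyb1]
      · exact (hyb2.map (F.map mj).hom).map
          (F.map mk).hom

end Colim

end SpecColimAux

section Main

open SpecColimAux PrimeSpectrum
open scoped Classical

variable {I : Type u} [SmallCategory I] [IsFiltered I]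

theorem locallyConstant_spec_colimit_bijective' (F : I ⥤ CommRingCat.{u}) (c : Cocone F)
    (hc : IsColimit c) (A : Type u) :
    Function.Bijective
      (colimit.desc (locallyConstantSpecFunctor F A) (locallyConstantSpecCocone F c A)) := by
  set G := locallyConstantSpecFunctor F A with hG
  set D := locallyConstantSpecCocone F c A with hD
  have hdesc : ∀ (l : I) (h : LocallyConstant (PrimeSpectrum (F.obj l)) A),
      colimit.desc G D (colimit.ι G l h)
        = LocallyConstant.comap (⟨PrimeSpectrum.comap (c.ι.app l).hom, PrimeSpectrum.continuous_comap _⟩ : C(_, _)) h := by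
    intro l h
    have := ConcreteCategory.congr_hom (colimit.ι_desc D l) h
    exact this
  constructor
  · -- injectivity
    intro x y hxy
    obtain ⟨i, f, rfl⟩ := Types.jointly_surjective' x
    obtain ⟨j, g, rfl⟩ := Types.jointly_surjective' y
    set k := IsFiltered.max i j
    set f' : LocallyConstant (PrimeSpectrum (F.obj k)) A :=
      G.map (IsFiltered.leftToMax i j) f with hf'def
    set g' : LocallyConstant (PrimeSpectrum (F.obj k)) A :=
      G.map (IsFiltered.rightToMax i j) g with hg'def
    have hf' : colimit.ι G k f' = colimit.ι G i f :=
      ConcreteCategory.congr_hom (colimit.w G (IsFiltered.leftToMax i j)) f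
    have hg' : colimit.ι G k g' = colimit.ι G j g :=
      ConcreteCategory.congr_hom (colimit.w G (IsFiltered.rightToMax i j)) g
    rw [← hf', ← hg']
    have heq : LocallyConstant.comap (⟨PrimeSpectrum.comap (c.ι.app k).hom, PrimeSpectrum.continuous_comap _⟩ : C(_, _)) f'
        = LocallyConstant.comap (⟨PrimeSpectrum.comap (c.ι.app k).hom, PrimeSpectrum.continuous_comap _⟩ : C(_, _)) g' := by
      rw [← hdesc, ← hdesc, hf', hg', hxy]
    have hpt : ∀ q : PrimeSpectrum c.pt,
        f' (PrimeSpectrum.comap (c.ι.app k).hom q) = g' (PrimeSpectrum.comap (c.ι.app k).hom q) := by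
      intro q
      have := congrArg (fun (h : LocallyConstant (PrimeSpectrum c.pt) A) => h q) heq
      simpa [LocallyConstant.coe_comap] using this
    obtain ⟨e, he, hbe⟩ :=
      PrimeSpectrum.exists_idempotent_basicOpen_eq_of_isClopen (isClopen_eqLocus f' g')
    have hunit : IsUnit ((c.ι.app k) e) := by
      apply isUnit_of_not_mem_prime
      intro q hq
      have hmem : PrimeSpectrum.comap (c.ι.app k).hom q ∈ {p | f' p = g' p} := hpt q
      rw [hbe] at hmem
      have : e ∉ (PrimeSpectrum.comap (c.ι.app k).hom q).asIdeal :=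
        (PrimeSpectrum.mem_basicOpen _ _).mp hmem
      exact this (by rwa [PrimeSpectrum.comap_asIdeal, Ideal.mem_comap])
    have h1 : c.ι.app k e = c.ι.app k 1 := by
      rw [map_one]
      exact idem_eq_one_of_isUnit (he.map (c.ι.app k).hom) hunit
    obtain ⟨l, m, hm⟩ := exists_map_eq hc e 1 h1
    rw [map_one] at hm
    have hfg : G.map m f' = G.map m g' := by
      show LocallyConstant.comap (⟨PrimeSpectrum.comap (F.map m).hom, PrimeSpectrum.continuous_comap _⟩ : C(_, _)) f'
        = LocallyConstant.comap (⟨PrimeSpectrum.comap (F.map m).hom, PrimeSpectrum.continuous_comap _⟩ : C(_, _)) g'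
      apply LocallyConstant.ext
      intro p
      have hp' : PrimeSpectrum.comap (F.map m).hom p ∈ {pp | f' pp = g' pp} := by
        rw [hbe]
        refine (PrimeSpectrum.mem_basicOpen _ _).mpr ?_
        rw [PrimeSpectrum.comap_asIdeal, Ideal.mem_comap, hm]
        intro h1p
        exact p.isPrime.ne_top (p.asIdeal.eq_top_of_isUnit_mem h1p isUnit_one)
      rw [LocallyConstant.coe_comap_apply, LocallyConstant.coe_comap_apply]
      exact hp'
    have w1 : colimit.ι G l (G.map m f') = colimit.ι G k f' := ConcreteCategory.congr_hom (colimit.w G m) f'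
    have w2 : colimit.ι G l (G.map m g') = colimit.ι G k g' := ConcreteCategory.congr_hom (colimit.w G m) g'
    rw [← w1, ← w2, hfg]
  · -- surjectivity
    intro f₁
    set f : LocallyConstant (PrimeSpectrum c.pt) A := f₁ with hff
    rcases isEmpty_or_nonempty A with hA | hA
    · haveI hspec : IsEmpty (PrimeSpectrum c.pt) := ⟨fun q => IsEmpty.false (f q)⟩
      haveI : Subsingleton c.pt := by
        rcases subsingleton_or_nontrivial c.pt with h | h
        · exact h
        · obtain ⟨q⟩ := (inferInstance : Nonempty (PrimeSpectrum c.pt))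
          exact (hspec.false q).elim
      obtain ⟨j0⟩ := IsFiltered.nonempty (C := I)
      have h10 : c.ι.app j0 1 = c.ι.app j0 0 := Subsingleton.elim (α := c.pt) _ _
      obtain ⟨k, m, hm⟩ := exists_map_eq hc 1 0 h10
      rw [map_one, map_zero] at hm
      haveI : Subsingleton (F.obj k) := subsingleton_of_zero_eq_one hm.symm
      haveI : IsEmpty (PrimeSpectrum (F.obj k)) := inferInstance
      refine ⟨colimit.ι G k
        ⟨fun p => isEmptyElim p, fun s => by
          rw [Set.eq_empty_of_isEmpty ((fun p => isEmptyElim p : _ → A) ⁻¹' s)]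
          exact isOpen_empty⟩, ?_⟩
      rw [hdesc]
      apply LocallyConstant.ext
      intro q
      exact (hspec.false q).elim
    · obtain ⟨a₀⟩ := hA
      have hfib : ∀ a : A, IsClopen (f ⁻¹' {a}) := by
        intro a
        constructor
        · rw [← isOpen_compl_iff, ← Set.preimage_compl]
          exact f.isLocallyConstant _
        · exact f.isLocallyConstant _
      choose e he hbe using fun a =>
        PrimeSpectrum.exists_idempotent_basicOpen_eq_of_isClopen (hfib a)
      have hTfin : (Set.range f).Finite := f.range_finite
      set L : List A := hTfin.toFinset.toList with hL
      obtain ⟨j, y, hy⟩ := exists_lift_idem hc L e he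
      have hmemL : ∀ q : PrimeSpectrum c.pt, f q ∈ L := by
        intro q
        rw [hL, Finset.mem_toList, Set.Finite.mem_toFinset]
        exact ⟨q, rfl⟩
      refine ⟨colimit.ι G j
        ⟨fun p => pick y a₀ L p,
          IsLocallyConstant.iff_isOpen_fiber.mpr
            (isOpen_pick_fiber y a₀ L fun a ha => (hy a ha).2)⟩, ?_⟩
      rw [hdesc]
      apply LocallyConstant.ext
      intro q
      simp only [LocallyConstant.coe_comap, Function.comp_apply, LocallyConstant.coe_mk]
      have hkey : ∀ a ∈ L, (y a ∉ (PrimeSpectrum.comap (c.ι.app j).hom q).asIdeal ↔ f q = a) := by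
        intro a ha
        rw [PrimeSpectrum.comap_asIdeal, Ideal.mem_comap, (hy a ha).1]
        constructor
        · intro hq
          have : q ∈ (basicOpen (e a) : Set (PrimeSpectrum c.pt)) :=
            (PrimeSpectrum.mem_basicOpen _ _).mpr hq
          rw [← hbe a] at this
          exact this
        · intro hq
          have : q ∈ f ⁻¹' {a} := hq
          rw [hbe a] at this
          exact (PrimeSpectrum.mem_basicOpen _ _).mp this
      apply pick_eq
      · exact hmemL q
      · exact (hkey (f q) (hmemL q)).mpr rfl
      · intro a ha hya
        exact ((hkey a ha).mp hya).symm

end Main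

theorem locallyConstant_spec_colimit_bijective {I : Type u} [SmallCategory I] [IsFiltered I]
    (F : I ⥤ CommRingCat.{u}) (c : Cocone F) (hc : IsColimit c) (A : Type u) :
    Function.Bijective
      (colimit.desc (locallyConstantSpecFunctor F A) (locallyConstantSpecCocone F c A)) :=
  locallyConstant_spec_colimit_bijective' F c hc A
end

section
/- Let K be a field, G a finite group, and L a nonzero commutative K-algebra equipped with an action of G by K-algebra automorphisms such that the K-algebra homomorphism L ⊗_K L ⟶ ∏_{g ∈ G} L, determined by x ⊗ y ↦ (x · g(y))_{g ∈ G}, is bijective. Then: (1) L is a finite-dimensional K-vector space of dimension equal to the order of G; (2) the induced action of G on the set of maximal ideals of L is transitive; and (3) for every maximal ideal m of L, the residue field L/m is a finite Galois field extension of K whose degree divides the order of G. -/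
/-!
STATEMENT 6: Let `K` be a field, `G` a finite group acting on a nonzero commutative
`K`-algebra `L` by `K`-algebra automorphisms, such that the `K`-algebra homomorphism
`L ⊗[K] L ⟶ ∏_{g ∈ G} L`, `x ⊗ y ↦ (x * g y)_g`, is bijective (i.e. `Spec L → Spec K` is a
`G`-torsor).  Then (1) `L` is finite dimensional over `K` of dimension `|G|`; (2) `G` acts
transitively on the maximal ideals of `L`; (3) for every maximal ideal `m`, the residue
field `L ⧸ m` is a finite Galois extension of `K` whose degree divides `|G|`.
-/

open scoped TensorProduct

universe u v w

set_option maxHeartbeats 1600000 in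
theorem torsor_over_field_splits
    (K : Type u) (L : Type v) [Field K] [CommRing L] [Algebra K L] [Nontrivial L]
    (G : Type w) [Group G] [Finite G] (ρ : G →* (L ≃ₐ[K] L))
    (Φ : (L ⊗[K] L) →ₐ[K] (G → L))
    (hΦ : ∀ (x y : L) (g : G), Φ (x ⊗ₜ[K] y) g = x * ρ g y)
    (hbij : Function.Bijective Φ) :
    (FiniteDimensional K L ∧ Module.finrank K L = Nat.card G) ∧
    (∀ m m' : Ideal L, m.IsMaximal → m'.IsMaximal →
      ∃ g : G, m.map ((ρ g : L ≃ₐ[K] L) : L →+* L) = m') ∧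
    (∀ (m : Ideal L) (hm : m.IsMaximal),
      letI := Ideal.Quotient.field m
      FiniteDimensional K (L ⧸ m) ∧ IsGalois K (L ⧸ m) ∧
        Module.finrank K (L ⧸ m) ∣ Nat.card G) := by
  classical
  cases nonempty_fintype G
  let e : (L ⊗[K] L) ≃ₐ[K] (G → L) := AlgEquiv.ofBijective Φ hbij
  have hesymm : ∀ u, Φ (e.symm u) = u := fun u => e.apply_symm_apply u
  -- ## Part 1 : dimension count
  have hΦsmul : ∀ (c : L) (z : L ⊗[K] L), Φ (c • z) = c • Φ z := by
    intro c z
    induction z using TensorProduct.induction_on with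
    | zero => simp
    | tmul x y =>
        rw [TensorProduct.smul_tmul']
        funext g
        simp only [hΦ, Pi.smul_apply, smul_eq_mul, mul_assoc]
    | add a b ha hb => rw [smul_add, map_add, ha, hb, map_add, smul_add]
  let ΦL : (L ⊗[K] L) →ₗ[L] (G → L) :=
    { toFun := Φ, map_add' := map_add Φ, map_smul' := hΦsmul }
  let eL : (L ⊗[K] L) ≃ₗ[L] (G → L) := LinearEquiv.ofBijective ΦL hbij
  have hrank : Module.rank K L = (Nat.card G : Cardinal) := by
    have h := eL.lift_rank_eq
    rw [Module.rank_baseChange, rank_fun'] at h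
    rw [Cardinal.lift_lift, Cardinal.lift_natCast] at h
    rw [Nat.card_eq_fintype_card]
    exact Cardinal.lift_eq_nat_iff.mp h
  have hfd : FiniteDimensional K L :=
    Module.rank_lt_aleph0_iff.mp (by rw [hrank]; exact Cardinal.nat_lt_aleph0 _)
  have hfr : Module.finrank K L = Nat.card G := Module.finrank_eq_of_rank_eq hrank
  -- ## shared machinery
  have hmax_sup : ∀ (m I : Ideal L), m.IsMaximal → I.IsMaximal → I ≠ m → m ⊔ I = ⊤ := by
    intro m I hm hI hne
    by_contra hten
    have h1 : m = m ⊔ I := hm.eq_of_le hten le_sup_left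
    exact hne (hI.eq_of_le hm.ne_top (le_sup_right.trans h1.ge))
  have hmapmax : ∀ (m : Ideal L), m.IsMaximal → ∀ g : G,
      (m.map ((ρ g : L ≃ₐ[K] L) : L →+* L)).IsMaximal := fun m hm g =>
    hm.map_bijective _ (ρ g).bijective
  have splitter : ∀ (m₁ m₂ : Ideal L) (u : G → L),
      (∀ g : G, u g ∈ m₁ ⊔ m₂.map ((ρ g : L ≃ₐ[K] L) : L →+* L)) →
      ∃ w : L ⊗[K] L, Φ w = u ∧
        (Algebra.TensorProduct.map (Ideal.Quotient.mkₐ K m₁) (Ideal.Quotient.mkₐ K m₂)) w = 0 := by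
    intro m₁ m₂ u hu
    have hdecomp : ∀ g : G, ∃ a y : L, a ∈ m₁ ∧ y ∈ m₂ ∧ u g = a + ρ g y := by
      intro g
      obtain ⟨a, ha, b, hb, hab⟩ := Submodule.mem_sup.mp (hu g)
      obtain ⟨y, hy, hyb⟩ := (Ideal.mem_map_of_equiv (ρ g) b).mp hb
      exact ⟨a, y, ha, hy, by rw [hyb, hab]⟩
    choose a y ha hy hug using hdecomp
    refine ⟨∑ g, e.symm (Pi.single g 1) * (a g ⊗ₜ[K] 1 + 1 ⊗ₜ[K] y g), ?_, ?_⟩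
    · rw [map_sum]
      funext h
      rw [Finset.sum_apply]
      have hterm : ∀ g, (Φ (e.symm (Pi.single g 1) * (a g ⊗ₜ[K] 1 + 1 ⊗ₜ[K] y g))) h
          = (Pi.single g (u g) : G → L) h := by
        intro g
        rw [map_mul, hesymm, Pi.mul_apply]
        rcases eq_or_ne h g with rfl | hne
        · simp [Pi.single_apply, map_add, hΦ, ← hug]
        · simp [Pi.single_apply, Ne.symm hne]
      rw [Finset.sum_congr rfl fun g _ => hterm g, ← Finset.sum_apply,
        Finset.univ_sum_single]
    · rw [map_sum]
      refine Finset.sum_eq_zero fun g _ => ?_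
      rw [map_mul, map_add, Algebra.TensorProduct.map_tmul, Algebra.TensorProduct.map_tmul]
      have h1 : Ideal.Quotient.mkₐ K m₁ (a g) = 0 := by
        simpa [Ideal.Quotient.eq_zero_iff_mem] using ha g
      have h2 : Ideal.Quotient.mkₐ K m₂ (y g) = 0 := by
        simpa [Ideal.Quotient.eq_zero_iff_mem] using hy g
      rw [h1, h2, TensorProduct.zero_tmul, TensorProduct.tmul_zero, add_zero, mul_zero]
  -- ## Part 2 : transitivity
  have htrans : ∀ m m' : Ideal L, m.IsMaximal → m'.IsMaximal →
      ∃ g : G, m.map ((ρ g : L ≃ₐ[K] L) : L →+* L) = m' := by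
    intro m m' hm hm'
    by_contra hcon
    push_neg at hcon
    have hsup : ∀ g : G, m' ⊔ m.map ((ρ g : L ≃ₐ[K] L) : L →+* L) = ⊤ :=
      fun g => hmax_sup m' _ hm' (hmapmax m hm g) (hcon g)
    obtain ⟨w, hw1, hw2⟩ := splitter m' m 1 (by intro g; rw [hsup g]; exact Submodule.mem_top)
    have hw : w = 1 := hbij.1 (by rw [hw1, map_one])
    rw [hw, map_one] at hw2
    haveI h1 : Nontrivial (L ⧸ m') := Ideal.Quotient.nontrivial_iff.mpr hm'.ne_top
    haveI h2 : Nontrivial (L ⧸ m) := Ideal.Quotient.nontrivial_iff.mpr hm.ne_top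
    haveI : Nontrivial ((L ⧸ m') ⊗[K] (L ⧸ m)) := by
      let b1 := Module.Basis.ofVectorSpace K (L ⧸ m')
      let b2 := Module.Basis.ofVectorSpace K (L ⧸ m)
      obtain ⟨i⟩ := b1.index_nonempty
      obtain ⟨j⟩ := b2.index_nonempty
      exact nontrivial_of_ne _ _ ((b1.tensorProduct b2).ne_zero (i, j))
    exact one_ne_zero hw2
  refine ⟨⟨hfd, hfr⟩, htrans, ?_⟩
  -- ## Part 3 : residue fields are Galois
  intro m hm
  letI := Ideal.Quotient.field m
  haveI : Nontrivial (L ⧸ m) := Ideal.Quotient.nontrivial_iff.mpr hm.ne_top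
  have hfdE : FiniteDimensional K (L ⧸ m) :=
    Module.Finite.of_surjective (Ideal.Quotient.mkₐ K m).toLinearMap
      (Ideal.Quotient.mkₐ_surjective K m)
  -- the stabilizer subgroup of m
  have hmap_one : ∀ (I : Ideal L), I.map ((ρ (1:G) : L ≃ₐ[K] L) : L →+* L) = I := by
    intro I
    have h : ((ρ (1:G) : L ≃ₐ[K] L) : L →+* L) = RingHom.id L := by ext x; simp
    rw [h, Ideal.map_id]
  have hρmul : ∀ g g' : G, ((ρ (g * g') : L ≃ₐ[K] L) : L →+* L)
      = ((ρ g : L ≃ₐ[K] L) : L →+* L).comp ((ρ g' : L ≃ₐ[K] L) : L →+* L) := by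
    intro g g'; ext x; simp
  let H : Subgroup G :=
    { carrier := {g : G | m.map ((ρ g : L ≃ₐ[K] L) : L →+* L) = m}
      one_mem' := hmap_one m
      mul_mem' := by
        intro g g' hg hg'
        show m.map _ = m
        rw [hρmul, ← Ideal.map_map, hg', hg]
      inv_mem' := by
        intro g hg
        show m.map _ = m
        conv_lhs => rw [← hg]
        rw [Ideal.map_map, ← hρmul, inv_mul_cancel, hmap_one] }
  have hHmem : ∀ h : H, m.map ((ρ (h:G) : L ≃ₐ[K] L) : L →+* L) = m := fun h => h.2
  let σ : H → ((L ⧸ m) ≃ₐ[K] (L ⧸ m)) := fun h =>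
    Ideal.quotientEquivAlg m m (ρ (h:G)) (hHmem h).symm
  have hσ : ∀ (h : H) (x : L), σ h (Ideal.Quotient.mk m x) = Ideal.Quotient.mk m (ρ (h:G) x) :=
    fun h x => rfl
  -- the comparison maps
  let f₁ : (L ⧸ m) →ₐ[K] (H → (L ⧸ m)) := Pi.constAlgHom K H (L ⧸ m)
  let f₂ : (L ⧸ m) →ₐ[K] (H → (L ⧸ m)) :=
    Pi.algHom K (fun _ : H => L ⧸ m) (fun h => (σ h).toAlgHom)
  let Ψ : ((L ⧸ m) ⊗[K] (L ⧸ m)) →ₐ[K] (H → (L ⧸ m)) :=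
    Algebra.TensorProduct.lift f₁ f₂ fun x y => Commute.all _ _
  have hΨ_tmul : ∀ (x y : L ⧸ m) (h : H), Ψ (x ⊗ₜ[K] y) h = x * σ h y := by
    intro x y h
    simp [Ψ, Algebra.TensorProduct.lift_tmul, f₁, f₂]
  let π : (L ⊗[K] L) →ₐ[K] ((L ⧸ m) ⊗[K] (L ⧸ m)) :=
    Algebra.TensorProduct.map (Ideal.Quotient.mkₐ K m) (Ideal.Quotient.mkₐ K m)
  have hπ_tmul : ∀ x y : L,
      π (x ⊗ₜ[K] y) = (Ideal.Quotient.mk m x) ⊗ₜ[K] (Ideal.Quotient.mk m y) := by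
    intro x y; simp [π, Algebra.TensorProduct.map_tmul]
  have hπsurj : Function.Surjective π := by
    intro z
    induction z using TensorProduct.induction_on with
    | zero => exact ⟨0, map_zero π⟩
    | tmul x y =>
        obtain ⟨a, rfl⟩ := Ideal.Quotient.mk_surjective x
        obtain ⟨b, rfl⟩ := Ideal.Quotient.mk_surjective y
        exact ⟨a ⊗ₜ[K] b, hπ_tmul a b⟩
    | add a b ha hb =>
        obtain ⟨wa, rfl⟩ := ha; obtain ⟨wb, rfl⟩ := hb
        exact ⟨wa + wb, map_add π wa wb⟩
  have key : ∀ (z : L ⊗[K] L) (h : H), Ψ (π z) h = Ideal.Quotient.mk m (Φ z h) := by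
    intro z h
    induction z using TensorProduct.induction_on with
    | zero => simp
    | tmul x y => rw [hπ_tmul, hΨ_tmul, hσ, hΦ, map_mul]
    | add a b ha hb => simp only [map_add, Pi.add_apply, ha, hb]
  have hΨsurj : Function.Surjective Ψ := by
    intro v
    have hlift : ∀ h : H, ∃ x : L, Ideal.Quotient.mk m x = v h :=
      fun h => Ideal.Quotient.mk_surjective (v h)
    choose xv hxv using hlift
    let u : G → L := fun g => if hg : g ∈ H then xv ⟨g, hg⟩ else 0
    refine ⟨π (e.symm u), funext fun h => ?_⟩
    rw [key, hesymm]
    have hu : u (h:G) = xv h := by simp only [u, dif_pos h.2]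
    rw [hu, hxv]
  have hΨinj : Function.Injective Ψ := by
    rw [injective_iff_map_eq_zero]
    intro z hz
    obtain ⟨w, rfl⟩ := hπsurj z
    have hu : ∀ g : G, Φ w g ∈ m ⊔ m.map ((ρ g : L ≃ₐ[K] L) : L →+* L) := by
      intro g
      by_cases hg : g ∈ H
      · have h0 : Ideal.Quotient.mk m (Φ w g) = 0 := by
          rw [← key w ⟨g, hg⟩, hz]; rfl
        exact Submodule.mem_sup_left (Ideal.Quotient.eq_zero_iff_mem.mp h0)
      · have hsup : m ⊔ m.map ((ρ g : L ≃ₐ[K] L) : L →+* L) = ⊤ :=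
          hmax_sup m _ hm (hmapmax m hm g) hg
        rw [hsup]; exact Submodule.mem_top
    obtain ⟨w', hw'1, hw'2⟩ := splitter m m (Φ w) hu
    have hww : w' = w := hbij.1 hw'1
    rw [← hww]; exact hw'2
  -- dimension count : n = card H
  haveI : Fintype H := Fintype.ofFinite _
  have hcount : Module.finrank K (L ⧸ m) * Module.finrank K (L ⧸ m)
      = Fintype.card H * Module.finrank K (L ⧸ m) := by
    let Ψlin : ((L ⧸ m) ⊗[K] (L ⧸ m)) ≃ₗ[K] (H → (L ⧸ m)) :=
      LinearEquiv.ofBijective Ψ.toLinearMap ⟨hΨinj, hΨsurj⟩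
    have h := Ψlin.finrank_eq
    rw [Module.finrank_tensorProduct, Module.finrank_pi_fintype, Finset.sum_const,
      Finset.card_univ, smul_eq_mul] at h
    exact h
  have hn0 : Module.finrank K (L ⧸ m) ≠ 0 := Module.finrank_pos.ne'
  have hnH : Fintype.card H = Module.finrank K (L ⧸ m) :=
    (Nat.mul_right_cancel (Nat.pos_of_ne_zero hn0) hcount.symm)
  -- injectivity of σ
  have hσinj : Function.Injective σ := by
    intro h h' hEq
    by_contra hne
    obtain ⟨z, hzv⟩ := hΨsurj (fun t => if t = h then 1 else 0)
    have hsame : ∀ z, Ψ z h = Ψ z h' := by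
      intro z
      induction z using TensorProduct.induction_on with
      | zero => simp
      | tmul x y => rw [hΨ_tmul, hΨ_tmul, hEq]
      | add a b ha hb => simp only [map_add, Pi.add_apply, ha, hb]
    have h1 : Ψ z h = 1 := by rw [hzv]; simp
    have h2 : Ψ z h' = 0 := by rw [hzv]; simp [Ne.symm hne]
    exact one_ne_zero ((h1.symm.trans (hsame z)).trans h2)
  -- Galois
  haveI : NoZeroSMulDivisors K (L ⧸ m) :=
    by infer_instance
  haveI : Algebra.IsAlgebraic K (L ⧸ m) := Algebra.IsAlgebraic.of_finite K _
  have hcardaut : Fintype.card ((L ⧸ m) ≃ₐ[K] (L ⧸ m)) = Module.finrank K (L ⧸ m) := by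
    apply le_antisymm
    · calc Fintype.card ((L ⧸ m) ≃ₐ[K] (L ⧸ m))
          = Fintype.card ((L ⧸ m) →ₐ[K] (L ⧸ m)) :=
            Fintype.card_congr (algEquivEquivAlgHom K (L ⧸ m)).toEquiv
        _ ≤ Module.finrank (L ⧸ m) ((L ⧸ m) →ₗ[K] (L ⧸ m)) := finrank_algHom K (L ⧸ m)
        _ = Module.finrank K (L ⧸ m) := Module.finrank_linearMap_self K (L ⧸ m) (L ⧸ m)
    · rw [← hnH]
      exact Fintype.card_le_of_injective σ hσinj
  haveI hgal : IsGalois K (L ⧸ m) := IsGalois.of_card_aut_eq_finrank K (L ⧸ m) (Nat.card_eq_fintype_card.trans hcardaut)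
  refine ⟨hfdE, hgal, ?_⟩
  rw [← hnH, ← Nat.card_eq_fintype_card]
  exact Subgroup.card_subgroup_dvd_card H
end
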